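/- For every x ∈ (0, π/2) and every positive integer n, Σ_{k=2}^{2n} (-1)^{k+1} A(k) x^{2k} < cos x - (sin x / x)³ < Σ_{k=2}^{2n+1} (-1)^{k+1} A(k) x^{2k}. -/

import Mathlib

open Real Finset

/-- The coefficient `A(k) = (3^(2k+3) - 32k³ - 96k² - 88k - 27) / (4·(2k+3)!)`. -/
noncomputable def wchA (k : ℕ) : ℝ :=
  ((3 : ℝ) ^ (2 * k + 3) - 32 * (k : ℝ) ^ 3 - 96 * (k : ℝ) ^ 2 - 88 * (k : ℝ) - 27) /
    (4 * (Nat.factorial (2 * k + 3) : ℝ))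

lemma pow3_gt : ∀ k : ℕ, 2 ≤ k →
    32 * (k : ℝ) ^ 3 + 96 * (k : ℝ) ^ 2 + 88 * (k : ℝ) + 27 < (3 : ℝ) ^ (2 * k + 3) := by
  intro k hk
  induction k, hk using Nat.le_induction with
  | base => norm_num
  | succ k hk ih =>
    have h9 : (3 : ℝ) ^ (2 * (k + 1) + 3) = 9 * 3 ^ (2 * k + 3) := by
      rw [show 2 * (k + 1) + 3 = (2 * k + 3) + 2 by ring, pow_add]; ring
    have hk2 : (2 : ℝ) ≤ (k : ℝ) := by exact_mod_cast hk
    push_cast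
    rw [h9]
    nlinarith [ih]

lemma wchA_pos {k : ℕ} (hk : 2 ≤ k) : 0 < wchA k := by
  have h := pow3_gt k hk
  have hf : (0 : ℝ) < (Nat.factorial (2 * k + 3) : ℝ) := by
    exact_mod_cast Nat.factorial_pos _
  rw [wchA]
  apply div_pos (by linarith) (by linarith)

lemma keyH : ∀ k : ℕ, 2 ≤ k →
    2 * (2 * (k : ℝ) + 4) * (2 * (k : ℝ) + 5) *
      (32 * (k : ℝ) ^ 3 + 96 * (k : ℝ) ^ 2 + 88 * (k : ℝ) + 27) ≤ 99 * (3 : ℝ) ^ (2 * k + 3) := by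
  intro k hk
  induction k, hk using Nat.le_induction with
  | base => norm_num
  | succ k hk ih =>
    have h9 : (3 : ℝ) ^ (2 * (k + 1) + 3) = 9 * 3 ^ (2 * k + 3) := by
      rw [show 2 * (k + 1) + 3 = (2 * k + 3) + 2 by ring, pow_add]; ring
    have hk2 : (2 : ℝ) ≤ (k : ℝ) := by exact_mod_cast hk
    have hs : (0:ℝ) ≤ (k : ℝ) - 2 := by linarith
    have hpoly : 2 * (2 * ((k:ℝ)+1) + 4) * (2 * ((k:ℝ)+1) + 5) *
        (32 * ((k:ℝ)+1) ^ 3 + 96 * ((k:ℝ)+1) ^ 2 + 88 * ((k:ℝ)+1) + 27)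
        ≤ 9 * (2 * (2 * (k : ℝ) + 4) * (2 * (k : ℝ) + 5) *
          (32 * (k : ℝ) ^ 3 + 96 * (k : ℝ) ^ 2 + 88 * (k : ℝ) + 27)) := by
      nlinarith [hs, sq_nonneg ((k:ℝ) - 2), mul_nonneg (mul_nonneg hs hs) hs,
        mul_nonneg (mul_nonneg (mul_nonneg hs hs) hs) hs,
        mul_nonneg (mul_nonneg (mul_nonneg (mul_nonneg hs hs) hs) hs) hs]
    push_cast
    rw [h9]
    linarith

lemma wchA_ratio {k : ℕ} (hk : 2 ≤ k) : 5 * wchA (k + 1) ≤ 2 * wchA k := by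
  have hF : (0 : ℝ) < (Nat.factorial (2 * k + 3) : ℝ) := by exact_mod_cast Nat.factorial_pos _
  have hF' : ((Nat.factorial (2 * (k + 1) + 3)) : ℝ)
      = (2 * (k : ℝ) + 5) * ((2 * (k : ℝ) + 4) * (Nat.factorial (2 * k + 3) : ℝ)) := by
    rw [show 2 * (k + 1) + 3 = (2 * k + 4) + 1 by ring, Nat.factorial_succ,
      show 2 * k + 4 = (2 * k + 3) + 1 by ring, Nat.factorial_succ]
    push_cast; ring
  have h9 : (3 : ℝ) ^ (2 * (k + 1) + 3) = 9 * 3 ^ (2 * k + 3) := by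
    rw [show 2 * (k + 1) + 3 = (2 * k + 3) + 2 by ring, pow_add]; ring
  have hH := keyH k hk
  have hG := pow3_gt k hk
  have hk2 : (2 : ℝ) ≤ (k : ℝ) := by exact_mod_cast hk
  have hX : (0 : ℝ) < (3:ℝ) ^ (2 * k + 3) := by positivity
  have hq : (0:ℝ) ≤ 2 * (2 * (k:ℝ) + 4) * (2 * (k:ℝ) + 5) - 144 := by nlinarith
  have hp' : (0:ℝ) ≤ 32 * ((k:ℝ)+1) ^ 3 + 96 * ((k:ℝ)+1) ^ 2 + 88 * ((k:ℝ)+1) + 27 := by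
    positivity
  have hcore : 5 * (9 * (3:ℝ) ^ (2*k+3) - (32 * ((k:ℝ)+1) ^ 3 + 96 * ((k:ℝ)+1) ^ 2 + 88 * ((k:ℝ)+1) + 27))
      ≤ 2 * ((3:ℝ) ^ (2*k+3) - (32 * (k:ℝ) ^ 3 + 96 * (k:ℝ) ^ 2 + 88 * (k:ℝ) + 27)) *
        ((2 * (k:ℝ) + 5) * (2 * (k:ℝ) + 4)) := by
    nlinarith [mul_nonneg hq hX.le]
  rw [wchA, wchA, mul_div_assoc', mul_div_assoc', div_le_div_iff₀ (by positivity) (by positivity),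
    hF', h9]
  push_cast
  nlinarith [mul_le_mul_of_nonneg_right hcore (by positivity : (0:ℝ) ≤ 4 * (Nat.factorial (2*k+3) : ℝ))]

lemma hasSum_f {x : ℝ} (hx : x ≠ 0) :
    HasSum (fun k : ℕ => (-1 : ℝ) ^ (k + 1) * wchA k * x ^ (2 * k))
      (Real.cos x - (Real.sin x / x) ^ 3) := by
  have hc := (Real.hasSum_cos x).mul_left (4 * x ^ 3)
  have hs := (Real.hasSum_sin x).mul_left 3
  have hs3 := Real.hasSum_sin (3 * x)
  have hd := hs3.sub hs
  have hd' : HasSum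
      (fun n : ℕ => (-1:ℝ) ^ (n+1) * (3*x) ^ (2*(n+1)+1) / (Nat.factorial (2*(n+1)+1) : ℝ)
        - 3 * ((-1:ℝ) ^ (n+1) * x ^ (2*(n+1)+1) / (Nat.factorial (2*(n+1)+1) : ℝ)))
      (Real.sin (3*x) - 3 * Real.sin x) := by
    have h0 : ((-1:ℝ) ^ 0 * (3*x) ^ (2*0+1) / (Nat.factorial (2*0+1) : ℝ)
        - 3 * ((-1:ℝ) ^ 0 * x ^ (2*0+1) / (Nat.factorial (2*0+1) : ℝ))) = 0 := by
      norm_num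
    have := (hasSum_nat_add_iff' (f := fun n : ℕ =>
      (-1:ℝ) ^ n * (3*x) ^ (2*n+1) / (Nat.factorial (2*n+1) : ℝ)
        - 3 * ((-1:ℝ) ^ n * x ^ (2*n+1) / (Nat.factorial (2*n+1) : ℝ))) 1).2 hd
    simp only [Finset.sum_range_one] at this
    rw [h0, sub_zero] at this
    exact this
  have hsum := hc.add hd'
  have key : ∀ n : ℕ,
      4 * x ^ 3 * ((-1:ℝ) ^ n * x ^ (2*n) / (Nat.factorial (2*n) : ℝ))
        + ((-1:ℝ) ^ (n+1) * (3*x) ^ (2*(n+1)+1) / (Nat.factorial (2*(n+1)+1) : ℝ)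
          - 3 * ((-1:ℝ) ^ (n+1) * x ^ (2*(n+1)+1) / (Nat.factorial (2*(n+1)+1) : ℝ)))
      = ((-1:ℝ) ^ (n+1) * wchA n * x ^ (2*n)) * (4 * x ^ 3) := by
    intro n
    have hfac : ((Nat.factorial (2*(n+1)+1)) : ℝ)
        = (2*(n:ℝ)+3) * ((2*(n:ℝ)+2) * ((2*(n:ℝ)+1) * (Nat.factorial (2*n) : ℝ))) := by
      rw [show 2*(n+1)+1 = (2*n+2)+1 by ring, Nat.factorial_succ,
        show 2*n+2 = (2*n+1)+1 by ring, Nat.factorial_succ,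
        show 2*n+1 = (2*n)+1 by ring, Nat.factorial_succ]
      push_cast; ring
    have hfacn : ((Nat.factorial (2*n)) : ℝ) ≠ 0 := by
      exact_mod_cast (Nat.factorial_pos _).ne'
    have hfac3 : ((Nat.factorial (2*n+3)) : ℝ)
        = (2*(n:ℝ)+3) * ((2*(n:ℝ)+2) * ((2*(n:ℝ)+1) * (Nat.factorial (2*n) : ℝ))) := by
      rw [show 2*n+3 = (2*n+2)+1 by rfl, Nat.factorial_succ,
        show 2*n+2 = (2*n+1)+1 by rfl, Nat.factorial_succ,
        show 2*n+1 = (2*n)+1 by rfl, Nat.factorial_succ]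
      push_cast; ring
    have hexp : (3*x) ^ (2*(n+1)+1) = (3:ℝ) ^ (2*n+3) * x ^ (2*n+3) := by
      rw [mul_pow, show 2*(n+1)+1 = 2*n+3 by ring]
    have hxe : x ^ (2*n+3) = x ^ (2*n) * x ^ 3 := by rw [← pow_add]
    have hxe2 : x ^ (2*(n+1)+1) = x ^ (2*n) * x ^ 3 := by
      rw [show 2*(n+1)+1 = 2*n+3 by ring, ← pow_add]
    rw [wchA, hexp, hxe, hxe2, hfac, hfac3]
    have h1 : (0:ℝ) < 2*(n:ℝ)+1 := by positivity
    have h2 : (0:ℝ) < 2*(n:ℝ)+2 := by positivity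
    have h3 : (0:ℝ) < 2*(n:ℝ)+3 := by positivity
    field_simp
    ring
  have hsum2 : HasSum (fun n : ℕ => ((-1:ℝ) ^ (n+1) * wchA n * x ^ (2*n)) * (4 * x ^ 3))
      (4 * x ^ 3 * Real.cos x + (Real.sin (3*x) - 3 * Real.sin x)) := by
    exact (funext key) ▸ hsum
  have hx3 : (4 : ℝ) * x ^ 3 ≠ 0 := by positivity
  have := hsum2.div_const (4 * x ^ 3)
  have hval : (4 * x ^ 3 * Real.cos x + (Real.sin (3*x) - 3 * Real.sin x)) / (4 * x ^ 3)
      = Real.cos x - (Real.sin x / x) ^ 3 := by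
    rw [Real.sin_three_mul]
    field_simp
    ring
  rw [hval] at this
  have hfun : (fun i : ℕ => (-1:ℝ) ^ (i + 1) * wchA i * x ^ (2 * i) * (4 * x ^ 3) / (4 * x ^ 3))
      = fun k : ℕ => (-1 : ℝ) ^ (k + 1) * wchA k * x ^ (2 * k) := by
    funext n
    rw [mul_div_assoc, div_self hx3, mul_one]
  rw [hfun] at this
  exact this

lemma a_decr {x : ℝ} (hx0 : 0 < x) (hxp : x < π / 2) {k : ℕ} (hk : 2 ≤ k) :
    wchA (k + 1) * x ^ (2 * (k + 1)) < wchA k * x ^ (2 * k) := by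
  have hx2 : x ^ 2 < 5 / 2 := by nlinarith [Real.pi_lt_d2, mul_pos hx0 hx0]
  have hA1 : 0 < wchA (k + 1) := wchA_pos (by omega)
  have h3 : wchA (k + 1) * x ^ 2 < wchA k := by nlinarith [wchA_ratio hk]
  have hxe : x ^ (2 * (k + 1)) = x ^ 2 * x ^ (2 * k) := by
    rw [← pow_add]; ring_nf
  rw [hxe, ← mul_assoc]
  exact mul_lt_mul_of_pos_right h3 (pow_pos hx0 _)

lemma alt_tail_pos (b : ℕ → ℝ) (hsum : Summable fun j : ℕ => (-1 : ℝ) ^ j * b j)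
    (hdec : ∀ j, b (j + 1) < b j) : 0 < ∑' j : ℕ, (-1 : ℝ) ^ j * b j := by
  have hge : Summable (fun i : ℕ => (-1 : ℝ) ^ (2 * i) * b (2 * i)) := by
    have := hsum.comp_injective (i := fun n : ℕ => 2 * n) (fun a b h => by simp only at h; omega)
    exact this.congr (fun _ => rfl)
  have hgo : Summable (fun i : ℕ => (-1 : ℝ) ^ (2 * i + 1) * b (2 * i + 1)) := by
    have := hsum.comp_injective (i := fun n : ℕ => 2 * n + 1) (fun a b h => by simp only at h; omega)
    exact this.congr (fun _ => rfl)
  have hpair : ∀ i : ℕ,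
      0 < (-1 : ℝ) ^ (2 * i) * b (2 * i) + (-1 : ℝ) ^ (2 * i + 1) * b (2 * i + 1) := by
    intro i
    have he : (-1 : ℝ) ^ (2 * i) = 1 := by rw [pow_mul]; norm_num
    have ho : (-1 : ℝ) ^ (2 * i + 1) = -1 := by rw [pow_add, pow_mul]; norm_num
    rw [he, ho]
    have := hdec (2 * i)
    linarith
  have hsplit := tsum_even_add_odd (f := fun j => (-1 : ℝ) ^ j * b j) hge hgo
  have hpos : 0 < ∑' i : ℕ, ((-1 : ℝ) ^ (2 * i) * b (2 * i)
      + (-1 : ℝ) ^ (2 * i + 1) * b (2 * i + 1)) :=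
    Summable.tsum_pos (hge.add hgo) (fun i => (hpair i).le) 0 (hpair 0)
  rw [← hsplit, ← Summable.tsum_add hge hgo]
  exact hpos

lemma tail_pos {x : ℝ} (hx0 : 0 < x) (hxp : x < π / 2) {m : ℕ} (hm : 2 ≤ m)
    (hsum : Summable fun k : ℕ => (-1 : ℝ) ^ (k + 1) * wchA k * x ^ (2 * k)) :
    0 < ∑' j : ℕ, (-1 : ℝ) ^ j * (wchA (j + m) * x ^ (2 * (j + m))) := by
  apply alt_tail_pos (fun j => wchA (j + m) * x ^ (2 * (j + m)))
  · have h1 : Summable (fun j : ℕ =>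
        (-1 : ℝ) ^ ((j + m) + 1) * wchA (j + m) * x ^ (2 * (j + m))) :=
      (summable_nat_add_iff (f := fun k : ℕ => (-1 : ℝ) ^ (k + 1) * wchA k * x ^ (2 * k)) m).2
        hsum
    refine (h1.mul_left ((-1 : ℝ) ^ (m + 1))).congr fun j => ?_
    have hpow : (-1 : ℝ) ^ (m + 1) * (-1 : ℝ) ^ (j + m + 1) = (-1 : ℝ) ^ j := by
      rw [← pow_add, show m + 1 + (j + m + 1) = j + 2 * (m + 1) by ring, pow_add, pow_mul]
      norm_num
    calc (-1 : ℝ) ^ (m + 1) * ((-1 : ℝ) ^ (j + m + 1) * wchA (j + m) * x ^ (2 * (j + m)))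
        = ((-1 : ℝ) ^ (m + 1) * (-1 : ℝ) ^ (j + m + 1)) * (wchA (j + m) * x ^ (2 * (j + m))) :=
          by ring
      _ = (-1 : ℝ) ^ j * (wchA (j + m) * x ^ (2 * (j + m))) := by rw [hpow]
  · intro j
    have := a_decr hx0 hxp (k := j + m) (by omega)
    simpa [show j + 1 + m = (j + m) + 1 by omega] using this

theorem cos_sub_sinx_div_x_cubed_bounds :
    ∀ x ∈ Set.Ioo (0 : ℝ) (π / 2), ∀ n : ℕ, 1 ≤ n →
      (∑ k ∈ Finset.Icc 2 (2 * n), (-1 : ℝ) ^ (k + 1) * wchA k * x ^ (2 * k))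
          < Real.cos x - (Real.sin x / x) ^ 3 ∧
      Real.cos x - (Real.sin x / x) ^ 3
          < ∑ k ∈ Finset.Icc 2 (2 * n + 1), (-1 : ℝ) ^ (k + 1) * wchA k * x ^ (2 * k) := by
  intro x hx n hn
  obtain ⟨hx0, hxp⟩ := hx
  have hxne : x ≠ 0 := ne_of_gt hx0
  have hsf := hasSum_f hxne
  have hsum := hsf.summable
  have hA0 : wchA 0 = 0 := by norm_num [wchA]
  have hA1 : wchA 1 = 0 := by norm_num [wchA, Nat.factorial]
  -- main decomposition
  have key : ∀ m : ℕ, 1 ≤ m →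
      (∑ k ∈ Finset.Icc 2 m, (-1 : ℝ) ^ (k + 1) * wchA k * x ^ (2 * k))
        + ∑' j : ℕ, (-1 : ℝ) ^ ((j + (m+1)) + 1) * wchA (j + (m+1)) * x ^ (2 * (j + (m+1)))
      = Real.cos x - (Real.sin x / x) ^ 3 := by
    intro m hm
    have h1 := Summable.sum_add_tsum_nat_add
      (f := fun k : ℕ => (-1 : ℝ) ^ (k + 1) * wchA k * x ^ (2 * k)) (m + 1) hsum
    rw [hsf.tsum_eq] at h1
    have h2 : ∑ i ∈ Finset.range (m + 1), (-1 : ℝ) ^ (i + 1) * wchA i * x ^ (2 * i)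
        = ∑ k ∈ Finset.Icc 2 m, (-1 : ℝ) ^ (k + 1) * wchA k * x ^ (2 * k) := by
      rw [Finset.range_eq_Ico,
        ← Finset.sum_Ico_consecutive _ (by omega : 0 ≤ 2) (by omega : 2 ≤ m + 1)]
      have h0 : ∑ i ∈ Finset.Ico 0 2, (-1 : ℝ) ^ (i + 1) * wchA i * x ^ (2 * i) = 0 := by
        rw [show Finset.Ico 0 2 = Finset.range 2 from rfl]
        simp [Finset.sum_range_succ, hA0, hA1]
      rw [h0, zero_add, Finset.Ico_add_one_right_eq_Icc]
    rw [h2] at h1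
    exact h1
  constructor
  · -- lower bound: tail from 2n+1 positive
    have hk := key (2 * n) (by omega)
    have ht := tail_pos hx0 hxp (m := 2 * n + 1) (by omega) hsum
    have heq : ∑' j : ℕ, (-1 : ℝ) ^ ((j + (2*n+1)) + 1) * wchA (j + (2*n+1)) * x ^ (2 * (j + (2*n+1)))
        = ∑' j : ℕ, (-1 : ℝ) ^ j * (wchA (j + (2*n+1)) * x ^ (2 * (j + (2*n+1)))) := by
      refine tsum_congr fun j => ?_
      rw [show j + (2*n+1) + 1 = j + 2 * (n + 1) by ring, pow_add, pow_mul]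
      norm_num
      ring
    rw [heq] at hk
    linarith
  · -- upper bound: tail from 2n+2 negative
    have hk := key (2 * n + 1) (by omega)
    have ht := tail_pos hx0 hxp (m := 2 * n + 2) (by omega) hsum
    have heq : ∑' j : ℕ, (-1 : ℝ) ^ ((j + (2*n+1+1)) + 1) * wchA (j + (2*n+1+1)) * x ^ (2 * (j + (2*n+1+1)))
        = -∑' j : ℕ, (-1 : ℝ) ^ j * (wchA (j + (2*n+2)) * x ^ (2 * (j + (2*n+2)))) := by
      rw [← tsum_neg]
      refine tsum_congr fun j => ?_
      rw [show j + (2*n+1+1) + 1 = (j + 1) + 2 * (n + 1) by ring, pow_add, pow_mul]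
      norm_num
      rw [pow_succ]
      ring_nf
    rw [heq] at hk
    linarith
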